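/- In the singleton-argmax case, the maximum absolute difference functional d(f) = max_{x∈K} |f(x)| applied to f = P^{(1)} - P^{(2)} has Hadamard directional derivative d'_f(h) = sign(f(x₀)) · h(x₀) when |f| attains its maximum at a unique point x₀ with f(x₀) ≠ 0. -/

import Mathlib

open Filter

/-- In the singleton-argmax case, the maximum absolute difference
functional `d(g) = ‖g‖_∞ = max_{x ∈ K} |g x|` has Hadamard directional
derivative `d'_f(h) = sign (f x₀) · h x₀` at any `f ∈ C(K,ℝ)` whose absolute
value attains its maximum at a unique point `x₀` with `f x₀ ≠ 0`: for all
`h_n → h` in `C(K,ℝ)` and `t_n ↓ 0`,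
`(d(f + t_n h_n) - d(f)) / t_n → sign (f x₀) · h x₀`. -/
theorem maxabs_functional_hadamard_derivative
    {K : Type*} [MetricSpace K] [CompactSpace K] [Nonempty K]
    (f : C(K, ℝ)) (x₀ : K)
    (hmax : ∀ x, |f x| ≤ |f x₀|)
    (huniq : ∀ x, |f x| = |f x₀| → x = x₀)
    (hne : f x₀ ≠ 0)
    (h : C(K, ℝ)) (hn : ℕ → C(K, ℝ)) (tn : ℕ → ℝ)
    (hhn : Tendsto hn atTop (nhds h))
    (htn : Tendsto tn atTop (nhds 0)) (htnpos : ∀ n, 0 < tn n) :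
    Tendsto (fun n => (‖f + tn n • hn n‖ - ‖f‖) / tn n) atTop
      (nhds (Real.sign (f x₀) * h x₀)) := by
  set s : ℝ := Real.sign (f x₀) with hs_def
  have hfx0 : (0:ℝ) < |f x₀| := abs_pos.mpr hne
  have hs1 : |s| = 1 := by
    rcases hne.lt_or_gt with hlt | hlt
    · simp [hs_def, Real.sign_of_neg hlt]
    · simp [hs_def, Real.sign_of_pos hlt]
  have hsy : ∀ y : ℝ, s * y ≤ |y| := by
    intro y
    calc s * y ≤ |s * y| := le_abs_self _
      _ = |y| := by rw [abs_mul, hs1, one_mul]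
  have habs_s : ∀ y : ℝ, |s * y| = |y| := by
    intro y; rw [abs_mul, hs1, one_mul]
  have hsfx : s * f x₀ = |f x₀| := by
    rcases hne.lt_or_gt with hlt | hlt
    · rw [hs_def, Real.sign_of_neg hlt, abs_of_neg hlt]; ring
    · rw [hs_def, Real.sign_of_pos hlt, abs_of_pos hlt]; ring
  have hnormf : ‖f‖ = |f x₀| := by
    refine le_antisymm ?_ ?_
    · exact (ContinuousMap.norm_le _ (abs_nonneg _)).mpr (fun x => by
        simpa [Real.norm_eq_abs] using hmax x)
    · simpa [Real.norm_eq_abs] using f.norm_coe_le_norm x₀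
  -- maximizers of |f + tn n • hn n|
  have hmaxex : ∀ n, ∃ x : K, ∀ y : K,
      |(f + tn n • hn n) y| ≤ |(f + tn n • hn n) x| := by
    intro n
    obtain ⟨x, -, hx⟩ := isCompact_univ.exists_isMaxOn Set.univ_nonempty
      ((map_continuous (f + tn n • hn n)).abs.continuousOn)
    exact ⟨x, fun y => hx (Set.mem_univ y)⟩
  choose X hX using hmaxex
  have hnorm_g : ∀ n, ‖f + tn n • hn n‖ = |(f + tn n • hn n) (X n)| := by
    intro n
    refine le_antisymm ?_ ?_
    · exact (ContinuousMap.norm_le _ (abs_nonneg _)).mpr (fun x => by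
        simpa [Real.norm_eq_abs] using hX n x)
    · simpa [Real.norm_eq_abs] using (f + tn n • hn n).norm_coe_le_norm (X n)
  have happly : ∀ n (y : K), (f + tn n • hn n) y = f y + tn n * hn n y := by
    intro n y; simp
  have hbn : Tendsto (fun n => ‖hn n‖) atTop (nhds ‖h‖) :=
    (continuous_norm.tendsto h).comp hhn
  have htb : Tendsto (fun n => tn n * ‖hn n‖) atTop (nhds 0) := by
    simpa using htn.mul hbn
  -- |f (X n)| → |f x₀|
  have hfXlb : ∀ n, ‖f‖ - 2 * (tn n * ‖hn n‖) ≤ |f (X n)| := by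
    intro n
    have h1 : |f (X n)| ≥ |(f + tn n • hn n) (X n)| - tn n * ‖hn n‖ := by
      have := abs_sub_abs_le_abs_sub ((f + tn n • hn n) (X n)) (f (X n))
      have h2 : |(f + tn n • hn n) (X n) - f (X n)| ≤ tn n * ‖hn n‖ := by
        rw [happly]
        have := (hn n).norm_coe_le_norm (X n)
        rw [Real.norm_eq_abs] at this
        calc |f (X n) + tn n * hn n (X n) - f (X n)| = |tn n * hn n (X n)| := by ring_nf
          _ = tn n * |hn n (X n)| := by
              rw [abs_mul, abs_of_pos (htnpos n)]
          _ ≤ tn n * ‖hn n‖ := by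
              exact mul_le_mul_of_nonneg_left this (htnpos n).le
        
      linarith
    have h3 : ‖f + tn n • hn n‖ ≥ ‖f‖ - tn n * ‖hn n‖ := by
      have h5 := norm_sub_le (f + tn n • hn n) (tn n • hn n)
      have h4 : ‖tn n • hn n‖ ≤ tn n * ‖hn n‖ := by
        simpa [Real.norm_eq_abs, abs_of_pos (htnpos n)] using
          norm_smul_le (tn n) (hn n)
      simp only [add_sub_cancel_right] at h5
      linarith
    rw [hnorm_g n] at h3
    linarith
  have hfX : Tendsto (fun n => |f (X n)|) atTop (nhds |f x₀|) := by
    have hlow : Tendsto (fun n => ‖f‖ - 2 * (tn n * ‖hn n‖)) atTop (nhds |f x₀|) := by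
      have := (tendsto_const_nhds (x := ‖f‖) (f := atTop (α := ℕ))).sub
        ((htb.const_mul 2))
      simpa [hnormf] using this
    exact tendsto_of_tendsto_of_tendsto_of_le_of_le hlow tendsto_const_nhds
      hfXlb (fun n => hmax (X n))
  -- X n → x₀
  have hXx : Tendsto X atTop (nhds x₀) := by
    rw [tendsto_nhds]
    intro U hU hxU
    by_cases hC : Uᶜ.Nonempty
    · have hCc : IsCompact Uᶜ := (hU.isClosed_compl).isCompact
      obtain ⟨y, hyC, hy⟩ := hCc.exists_isMaxOn hC
        ((map_continuous f).abs.continuousOn)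
      have hylt : |f y| < |f x₀| := by
        refine lt_of_le_of_ne (hmax y) (fun e => hyC ?_)
        rw [huniq y e]; exact hxU
      filter_upwards [hfX.eventually (eventually_gt_nhds hylt)] with n hn'
      by_contra hXU
      exact absurd (hy hXU) (not_le.mpr hn')
    · filter_upwards with n
      rcases Set.not_nonempty_iff_eq_empty.mp hC with he
      have : X n ∉ Uᶜ := by rw [he]; exact Set.notMem_empty _
      simpa using this
  -- evaluation limits
  have hhx0 : Tendsto (fun n => hn n x₀) atTop (nhds (h x₀)) :=
    ((continuous_eval_const x₀).tendsto h).comp hhn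
  have hhX : Tendsto (fun n => hn n (X n)) atTop (nhds (h x₀)) := by
    have : Tendsto (fun n => (hn n, X n)) atTop (nhds (h, x₀)) :=
      hhn.prodMk_nhds hXx
    exact (continuous_eval.tendsto (h, x₀)).comp this
  -- squeeze
  have hlow : ∀ n, s * hn n x₀ ≤ (‖f + tn n • hn n‖ - ‖f‖) / tn n := by
    intro n
    rw [le_div_iff₀ (htnpos n)]
    have h1 : s * ((f + tn n • hn n) x₀) ≤ ‖f + tn n • hn n‖ := by
      calc s * ((f + tn n • hn n) x₀) ≤ |(f + tn n • hn n) x₀| := hsy _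
        _ ≤ ‖f + tn n • hn n‖ := by
            simpa [Real.norm_eq_abs] using (f + tn n • hn n).norm_coe_le_norm x₀
    rw [happly] at h1
    have : s * (f x₀ + tn n * hn n x₀) = ‖f‖ + s * hn n x₀ * tn n := by
      rw [hnormf, ← hsfx]; ring
    linarith [this ▸ h1]
  have hfXval : Tendsto (fun n => s * f (X n)) atTop (nhds |f x₀|) := by
    have : Tendsto (fun n => f (X n)) atTop (nhds (f x₀)) :=
      ((map_continuous f).tendsto x₀).comp hXx
    simpa [hsfx] using this.const_mul s
  have hupper : ∀ᶠ n in atTop, (‖f + tn n • hn n‖ - ‖f‖) / tn n ≤ s * hn n (X n) := by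
    have h1 : ∀ᶠ n in atTop, |f x₀| / 2 < s * f (X n) :=
      hfXval.eventually (eventually_gt_nhds (by linarith))
    have h2 : ∀ᶠ n in atTop, tn n * ‖hn n‖ < |f x₀| / 2 :=
      htb.eventually (eventually_lt_nhds (by linarith))
    filter_upwards [h1, h2] with n hn1 hn2
    rw [div_le_iff₀ (htnpos n)]
    have hbd : |tn n * hn n (X n)| ≤ tn n * ‖hn n‖ := by
      rw [abs_mul, abs_of_pos (htnpos n)]
      exact mul_le_mul_of_nonneg_left
        (by simpa [Real.norm_eq_abs] using (hn n).norm_coe_le_norm (X n)) (htnpos n).le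
    have hspos : 0 < s * ((f + tn n • hn n) (X n)) := by
      rw [happly, mul_add]
      have : s * (tn n * hn n (X n)) ≥ -(tn n * ‖hn n‖) := by
        have := hsy (-(tn n * hn n (X n)))
        rw [abs_neg] at this
        have h' : -(s * (tn n * hn n (X n))) ≤ |tn n * hn n (X n)| := by linarith [this]
        linarith [hbd]
      linarith
    have habsg : |(f + tn n • hn n) (X n)| = s * ((f + tn n • hn n) (X n)) := by
      rw [← habs_s ((f + tn n • hn n) (X n)), abs_of_pos hspos]
    rw [hnorm_g n, habsg, happly, hnormf]
    have hsf : s * f (X n) ≤ |f x₀| := le_trans (hsy _) (hmax _)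
    have : s * (f (X n) + tn n * hn n (X n)) = s * f (X n) + s * hn n (X n) * tn n := by
      ring
    linarith [this ▸ le_refl (s * (f (X n) + tn n * hn n (X n)))]
  refine tendsto_of_tendsto_of_tendsto_of_le_of_le'
    (hhx0.const_mul s) (hhX.const_mul s)
    (Eventually.of_forall hlow) hupper
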